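/- arXiv:2306.04761 — 3 statements merged into one kernel-verified Lean document; each statement's English description precedes it below -/
import Mathlib

section
/- With α = Σ_{i=1}^n x_i² and β = Σ_{i=1}^k x_i² + Σ_{i=k+1}^n y_i² on ℂⁿ, the function √(αβ) is weakly plurisubharmonic on ℂⁿ ∖ (L₁ ∪ L₂), where L₁ = {α = 0} and L₂ = {β = 0}. -/
noncomputable section

/-- ℂⁿ as a real inner product space. -/
abbrev Cn (n : ℕ) := EuclideanSpace ℂ (Fin n)

/-- α(x,y) = Σ xᵢ², the squared distance to L₁ = iℝⁿ. -/
def alph (n : ℕ) (z : Cn n) : ℝ := ∑ i, (z i).re ^ 2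

/-- β(x,y) = Σ_{i≤k} xᵢ² + Σ_{i>k} yᵢ² (0-based: i < k resp. k ≤ i). -/
def bet (n k : ℕ) (z : Cn n) : ℝ :=
  ∑ i : Fin n, if (i : ℕ) < k then (z i).re ^ 2 else (z i).im ^ 2

/-- The Levi quadratic form of a real function `f` at `z` on the (real) vector `v`:
`dd^c f(v, iv) = Hess f(v,v) + Hess f(iv,iv)`.  Weak plurisubharmonicity of `f` at `z`
(positive semidefiniteness of the complex Hessian `(∂²f/∂zᵢ∂z̄ⱼ)`) is equivalent to
`0 ≤ levi n f z v` for all `v`. -/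
def levi (n : ℕ) (f : Cn n → ℝ) (z v : Cn n) : ℝ :=
  iteratedFDeriv ℝ 2 f z ![v, v] + iteratedFDeriv ℝ 2 f z ![Complex.I • v, Complex.I • v]

/-- The symmetric bilinear form `dd^c f(·, i·)(v,w) = Hess f(v,w) + Hess f(iv,iw)`,
whose matrix in the standard real basis of ℝ²ⁿ is `M₀`. -/
def leviB (n : ℕ) (f : Cn n → ℝ) (z v w : Cn n) : ℝ :=
  iteratedFDeriv ℝ 2 f z ![v, w] + iteratedFDeriv ℝ 2 f z ![Complex.I • v, Complex.I • w]

open ContinuousLinearMap Finset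


def reL (n : ℕ) (i : Fin n) : Cn n →L[ℝ] ℝ :=
  Complex.reCLM.comp ((EuclideanSpace.proj i).restrictScalars ℝ)

def imL (n : ℕ) (i : Fin n) : Cn n →L[ℝ] ℝ :=
  Complex.imCLM.comp ((EuclideanSpace.proj i).restrictScalars ℝ)

@[simp] lemma reL_apply (n : ℕ) (i : Fin n) (z : Cn n) : reL n i z = (z i).re := rfl
@[simp] lemma imL_apply (n : ℕ) (i : Fin n) (z : Cn n) : imL n i z = (z i).im := rfl

def Aop (n : ℕ) : Cn n →L[ℝ] (Cn n →L[ℝ] ℝ) :=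
  ∑ i, (2:ℝ) • (reL n i).smulRight (reL n i)

def Bop (n k : ℕ) : Cn n →L[ℝ] (Cn n →L[ℝ] ℝ) :=
  ∑ i : Fin n, if (i:ℕ) < k then (2:ℝ) • (reL n i).smulRight (reL n i)
    else (2:ℝ) • (imL n i).smulRight (imL n i)

lemma Aop_apply (n : ℕ) (z w : Cn n) :
    Aop n z w = 2 * ∑ i : Fin n, (z i).re * (w i).re := by
  simp [Aop, ContinuousLinearMap.sum_apply, mul_sum, smul_eq_mul]

lemma Bop_apply (n k : ℕ) (z w : Cn n) :
    Bop n k z w = 2 * ∑ i : Fin n,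
      if (i:ℕ) < k then (z i).re * (w i).re else (z i).im * (w i).im := by
  simp only [Bop, ContinuousLinearMap.sum_apply, mul_sum]
  refine Finset.sum_congr rfl fun i _ => ?_
  split <;> simp [smul_eq_mul] <;> ring

lemma hasFDerivAt_alph (n : ℕ) (z : Cn n) : HasFDerivAt (alph n) (Aop n z) z := by
  have h : ∀ i ∈ Finset.univ (α := Fin n),
      HasFDerivAt (fun w : Cn n => (w i).re ^ 2) ((z i).re • reL n i + (z i).re • reL n i) z := by
    intro i _
    have h1 : HasFDerivAt (fun w : Cn n => reL n i w) (reL n i) z := (reL n i).hasFDerivAt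
    simpa [pow_two] using h1.fun_mul h1
  have := HasFDerivAt.fun_sum h
  refine this.congr_fderiv ?_
  · ext w
    simp only [ContinuousLinearMap.sum_apply]
    rw [Aop_apply, mul_sum]
    refine Finset.sum_congr rfl fun i _ => ?_
    simp only [ContinuousLinearMap.add_apply, ContinuousLinearMap.smul_apply, reL_apply,
      smul_eq_mul]
    ring

lemma hasFDerivAt_bet (n k : ℕ) (z : Cn n) : HasFDerivAt (bet n k) (Bop n k z) z := by
  have h : ∀ i ∈ Finset.univ (α := Fin n),
      HasFDerivAt (fun w : Cn n => if (i:ℕ) < k then (w i).re ^ 2 else (w i).im ^ 2)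
        (if (i:ℕ) < k then (z i).re • reL n i + (z i).re • reL n i
          else (z i).im • imL n i + (z i).im • imL n i) z := by
    intro i _
    by_cases hik : (i:ℕ) < k
    · simp only [hik, if_true]
      have h1 : HasFDerivAt (fun w : Cn n => reL n i w) (reL n i) z := (reL n i).hasFDerivAt
      simpa [pow_two] using h1.fun_mul h1
    · simp only [hik, if_false]
      have h1 : HasFDerivAt (fun w : Cn n => imL n i w) (imL n i) z := (imL n i).hasFDerivAt
      simpa [pow_two] using h1.fun_mul h1
  have := HasFDerivAt.fun_sum h
  refine this.congr_fderiv ?_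
  · ext w
    simp only [ContinuousLinearMap.sum_apply]
    rw [Bop_apply, mul_sum]
    refine Finset.sum_congr rfl fun i _ => ?_
    rw [apply_ite (fun (L : Cn n →L[ℝ] ℝ) => L w)]
    split <;>
      simp only [ContinuousLinearMap.add_apply, ContinuousLinearMap.smul_apply, reL_apply,
        imL_apply, smul_eq_mul] <;> ring

lemma norm_sq_eq (n : ℕ) (x : Cn n) : ‖x‖^2 = ∑ i, ((x i).re^2 + (x i).im^2) := by
  rw [EuclideanSpace.norm_eq, Real.sq_sqrt (by positivity)]
  refine Finset.sum_congr rfl fun i _ => ?_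
  rw [Complex.sq_norm, Complex.normSq_apply]; ring

lemma cs_main (n k : ℕ) (z v : Cn n) :
    (bet n k z * (2 * ∑ i, (z i).re * (v i).re)
      - alph n z * (2 * ∑ i : Fin n, if (i:ℕ) < k then (z i).re * (v i).re
          else (z i).im * (v i).im))^2
    + (bet n k z * (2 * ∑ i, (z i).re * (-(v i).im))
      - alph n z * (2 * ∑ i : Fin n, if (i:ℕ) < k then (z i).re * (-(v i).im)
          else (z i).im * (v i).re))^2
    ≤ 4 * (alph n z * bet n k z) * (alph n z + bet n k z)
        * ∑ i, ((v i).re^2 + (v i).im^2) := by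
  set a := alph n z with ha_def
  set b := bet n k z with hb_def
  set W : Cn n := WithLp.toLp 2 fun (i : Fin n) => if (i:ℕ) < k then (((b - a) * (z i).re : ℝ) : ℂ)
      else ((b * (z i).re : ℝ) : ℂ) - ((a * (z i).im : ℝ) : ℂ) * Complex.I with hW_def
  have hinner : (inner ℂ W v : ℂ) = ∑ i, (starRingEnd ℂ) (W i) * v i := by
    simp [PiLp.inner_apply, RCLike.inner_apply, mul_comm]
  have hre : (inner ℂ W v : ℂ).re
      = ∑ i : Fin n, if (i:ℕ) < k then (b - a) * (z i).re * (v i).re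
          else b * (z i).re * (v i).re - a * (z i).im * (v i).im := by
    rw [hinner, Complex.re_sum]
    refine Finset.sum_congr rfl fun i _ => ?_
    simp only [hW_def]
    split <;> simp [Complex.mul_re, Complex.sub_re, Complex.sub_im] <;> ring
  have him : (inner ℂ W v : ℂ).im
      = ∑ i : Fin n, if (i:ℕ) < k then (b - a) * (z i).re * (v i).im
          else b * (z i).re * (v i).im + a * (z i).im * (v i).re := by
    rw [hinner, Complex.im_sum]
    refine Finset.sum_congr rfl fun i _ => ?_
    simp only [hW_def]
    split <;> simp [Complex.mul_im, Complex.sub_re, Complex.sub_im] <;> ring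
  have hWnorm : ‖W‖^2 = ∑ i : Fin n, if (i:ℕ) < k then (b - a)^2 * (z i).re^2
      else b^2 * (z i).re^2 + a^2 * (z i).im^2 := by
    rw [norm_sq_eq]
    refine Finset.sum_congr rfl fun i _ => ?_
    simp only [hW_def]
    split <;> simp <;> ring
  -- decomposition
  set t := ∑ i : Fin n, if (i:ℕ) < k then (z i).re^2 else 0 with ht_def
  set a2 := ∑ i : Fin n, if (i:ℕ) < k then 0 else (z i).re^2 with ha2_def
  set b2 := ∑ i : Fin n, if (i:ℕ) < k then 0 else (z i).im^2 with hb2_def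
  have ht : 0 ≤ t := Finset.sum_nonneg fun i _ => by positivity
  have ha2 : 0 ≤ a2 := Finset.sum_nonneg fun i _ => by positivity
  have hb2 : 0 ≤ b2 := Finset.sum_nonneg fun i _ => by positivity
  have haeq : a = t + a2 := by
    rw [ha_def, alph, ht_def, ha2_def, ← Finset.sum_add_distrib]
    exact Finset.sum_congr rfl fun i _ => by split <;> ring
  have hbeq : b = t + b2 := by
    rw [hb_def, bet, ht_def, hb2_def, ← Finset.sum_add_distrib]
    exact Finset.sum_congr rfl fun i _ => by split <;> ring
  have hWval : ‖W‖^2 = (b-a)^2 * t + b^2 * a2 + a^2 * b2 := by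
    rw [hWnorm, ht_def, ha2_def, hb2_def, Finset.mul_sum, Finset.mul_sum, Finset.mul_sum,
      ← Finset.sum_add_distrib, ← Finset.sum_add_distrib]
    exact Finset.sum_congr rfl fun i _ => by split <;> ring
  have hWle : ‖W‖^2 ≤ (a * b) * (a + b) := by
    have h2 : (a*b)*(a+b) - ((b-a)^2 * t + b^2 * a2 + a^2 * b2) = 2 * t * (t+a2) * (t+b2) := by
      rw [haeq, hbeq]; ring
    nlinarith [mul_nonneg (mul_nonneg (mul_nonneg (by norm_num : (0:ℝ) ≤ 2) ht)
      (by linarith : (0:ℝ) ≤ t + a2)) (by linarith : (0:ℝ) ≤ t + b2)]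
  -- Cauchy-Schwarz
  have hcs : Complex.normSq (inner ℂ W v : ℂ) ≤ ‖W‖^2 * ‖v‖^2 := by
    have := norm_inner_le_norm (𝕜 := ℂ) W v
    have h2 : ‖(inner ℂ W v : ℂ)‖^2 ≤ (‖W‖ * ‖v‖)^2 := by
      apply pow_le_pow_left₀ (norm_nonneg _) this
    rw [Complex.sq_norm] at h2
    calc Complex.normSq (inner ℂ W v : ℂ) ≤ (‖W‖ * ‖v‖)^2 := h2
      _ = ‖W‖^2 * ‖v‖^2 := by ring
  have hnv : ‖v‖^2 = ∑ i, ((v i).re^2 + (v i).im^2) := norm_sq_eq n v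
  have hnv0 : (0:ℝ) ≤ ∑ i, ((v i).re^2 + (v i).im^2) :=
    Finset.sum_nonneg fun i _ => by positivity
  -- reassemble LHS
  have e1 : b * (2 * ∑ i, (z i).re * (v i).re)
      - a * (2 * ∑ i : Fin n, if (i:ℕ) < k then (z i).re * (v i).re
          else (z i).im * (v i).im)
      = 2 * ∑ i : Fin n, if (i:ℕ) < k then (b - a) * (z i).re * (v i).re
          else b * (z i).re * (v i).re - a * (z i).im * (v i).im := by
    simp only [Finset.mul_sum, ← Finset.sum_sub_distrib]
    refine Finset.sum_congr rfl fun i _ => ?_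
    split <;> ring
  have e2 : b * (2 * ∑ i, (z i).re * (-(v i).im))
      - a * (2 * ∑ i : Fin n, if (i:ℕ) < k then (z i).re * (-(v i).im)
          else (z i).im * (v i).re)
      = -(2 * ∑ i : Fin n, if (i:ℕ) < k then (b - a) * (z i).re * (v i).im
          else b * (z i).re * (v i).im + a * (z i).im * (v i).re) := by
    simp only [Finset.mul_sum, ← Finset.sum_sub_distrib, ← Finset.sum_neg_distrib]
    refine Finset.sum_congr rfl fun i _ => ?_
    split <;> ring
  rw [e1, e2]
  have final : (2 * (inner ℂ W v : ℂ).re)^2 + (-(2 * (inner ℂ W v : ℂ).im))^2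
      ≤ 4 * (a * b) * (a + b) * ∑ i, ((v i).re^2 + (v i).im^2) := by
    have h4 : (2 * (inner ℂ W v : ℂ).re)^2 + (-(2 * (inner ℂ W v : ℂ).im))^2
        = 4 * Complex.normSq (inner ℂ W v : ℂ) := by
      rw [Complex.normSq_apply]; ring
    rw [h4]
    calc 4 * Complex.normSq (inner ℂ W v : ℂ) ≤ 4 * (‖W‖^2 * ‖v‖^2) := by linarith
      _ ≤ 4 * ((a*b)*(a+b) * ‖v‖^2) := by
          have : (0:ℝ) ≤ ‖v‖^2 := by positivity
          nlinarith
      _ = 4 * (a * b) * (a + b) * ∑ i, ((v i).re^2 + (v i).im^2) := by rw [hnv]; ring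
  rw [hre, him] at final
  convert final using 2

-- final algebraic lemma
lemma final_ineq (a b s A B A' B' P P' R R' nv : ℝ)
    (ha : 0 < a) (hb : 0 < b) (hs : s = Real.sqrt (a*b))
    (hPsum : P + P' = 2*nv) (hRsum : R + R' = 2*nv)
    (hcs : (b*A - a*B)^2 + (b*A' - a*B')^2 ≤ 4*(a*b)*(a+b)*nv) :
    0 ≤ ((2*s)⁻¹ * (a*R + A*B + b*P + B*A)
          + (-(2*(1/(2*s)))/(2*s)^2) * ((a*B+b*A)*(a*B+b*A)))
      + ((2*s)⁻¹ * (a*R' + A'*B' + b*P' + B'*A')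
          + (-(2*(1/(2*s)))/(2*s)^2) * ((a*B'+b*A')*(a*B'+b*A'))) := by
  have hab : 0 < a*b := mul_pos ha hb
  have hs0 : 0 < s := hs ▸ Real.sqrt_pos.2 hab
  have hs2 : s^2 = a*b := by rw [hs]; exact Real.sq_sqrt hab.le
  set X := a*R + A*B + b*P + B*A + (a*R' + A'*B' + b*P' + B'*A') with hX
  set Y := (a*B+b*A)*(a*B+b*A) + (a*B'+b*A')*(a*B'+b*A') with hY
  have hP' : P' = 2*nv - P := by linarith
  have hR' : R' = 2*nv - R := by linarith
  have hid : 2*(a*b)*X - Y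
      = 4*(a*b)*(a+b)*nv - ((b*A - a*B)^2 + (b*A' - a*B')^2) := by
    rw [hX, hY, hP', hR']; ring
  have key : 0 ≤ 2*(a*b)*X - Y := by rw [hid]; linarith
  have hexpr : ((2*s)⁻¹ * (a*R + A*B + b*P + B*A)
          + (-(2*(1/(2*s)))/(2*s)^2) * ((a*B+b*A)*(a*B+b*A)))
      + ((2*s)⁻¹ * (a*R' + A'*B' + b*P' + B'*A')
          + (-(2*(1/(2*s)))/(2*s)^2) * ((a*B'+b*A')*(a*B'+b*A')))
      = (2*(a*b)*X - Y)/(4*s^3) := by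
    rw [hX, hY, ← hs2]
    field_simp
    ring
  rw [hexpr]
  exact div_nonneg key (by positivity)

lemma Iv_re (n : ℕ) (v : Cn n) (i : Fin n) : ((Complex.I • v) i).re = -(v i).im := by
  simp [PiLp.smul_apply, Complex.mul_re]
lemma Iv_im (n : ℕ) (v : Cn n) (i : Fin n) : ((Complex.I • v) i).im = (v i).re := by
  simp [PiLp.smul_apply, Complex.mul_im]

set_option maxHeartbeats 2000000 in
/-- √(αβ) is weakly plurisubharmonic on ℂⁿ ∖ (L₁ ∪ L₂),
where L₁ = {α = 0} and L₂ = {β = 0}. -/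
theorem sqrt_product_weakly_psh (n k : ℕ) (hk : k ≤ n) (z : Cn n)
    (h1 : alph n z ≠ 0) (h2 : bet n k z ≠ 0) (v : Cn n) :
    0 ≤ levi n (fun w => Real.sqrt (alph n w * bet n k w)) z v := by
  have ha : 0 < alph n z :=
    lt_of_le_of_ne (Finset.sum_nonneg fun i _ => by positivity) (Ne.symm h1)
  have hb : 0 < bet n k z :=
    lt_of_le_of_ne (Finset.sum_nonneg fun i _ => by positivity) (Ne.symm h2)
  have hg : 0 < alph n z * bet n k z := mul_pos ha hb
  set g : Cn n → ℝ := fun w => alph n w * bet n k w with hg_def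
  set D : Cn n → (Cn n →L[ℝ] ℝ) :=
    fun w => alph n w • Bop n k w + bet n k w • Aop n w with hD_def
  have hgderiv : ∀ w, HasFDerivAt g (D w) w :=
    fun w => (hasFDerivAt_alph n w).mul (hasFDerivAt_bet n k w)
  have hgcont : ContinuousAt g z := (hgderiv z).continuousAt
  have hne : ∀ᶠ w in nhds z, g w ≠ 0 := hgcont.eventually_ne hg.ne'
  set G : Cn n → (Cn n →L[ℝ] ℝ) :=
    fun w => (2 * Real.sqrt (g w))⁻¹ • D w with hG_def
  have hf : ∀ w, g w ≠ 0 →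
      HasFDerivAt (fun w => Real.sqrt (alph n w * bet n k w)) (G w) w := by
    intro w hw
    have := (Real.hasDerivAt_sqrt hw).comp_hasFDerivAt w (hgderiv w)
    refine this.congr_fderiv ?_
    simp [hG_def, one_div]
  have hGev : fderiv ℝ (fun w => Real.sqrt (alph n w * bet n k w)) =ᶠ[nhds z] G :=
    hne.mono fun w hw => (hf w hw).fderiv
  -- derivative of the scalar factor
  have hsqz : Real.sqrt (g z) ≠ 0 := by
    have := Real.sqrt_pos.2 hg; exact this.ne'
  have hinv : HasDerivAt (fun t => (2 * Real.sqrt t)⁻¹)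
      (-(2 * (1/(2 * Real.sqrt (g z)))) / (2 * Real.sqrt (g z))^2) (g z) := by
    have h2s : HasDerivAt (fun t => 2 * Real.sqrt t)
        (2 * (1/(2 * Real.sqrt (g z)))) (g z) :=
      (Real.hasDerivAt_sqrt hg.ne').const_mul 2
    exact h2s.inv (by positivity)
  have hc : HasFDerivAt (fun w => (2 * Real.sqrt (g w))⁻¹)
      ((-(2 * (1/(2 * Real.sqrt (g z)))) / (2 * Real.sqrt (g z))^2) • D z) z :=
    hinv.comp_hasFDerivAt z (hgderiv z)
  have hD1 : HasFDerivAt (fun w => alph n w • Bop n k w)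
      (alph n z • (Bop n k) + (Aop n z).smulRight (Bop n k z)) z :=
    (hasFDerivAt_alph n z).smul (Bop n k).hasFDerivAt
  have hD2 : HasFDerivAt (fun w => bet n k w • Aop n w)
      (bet n k z • (Aop n) + (Bop n k z).smulRight (Aop n z)) z :=
    (hasFDerivAt_bet n k z).smul (Aop n).hasFDerivAt
  have hD : HasFDerivAt D
      ((alph n z • (Bop n k) + (Aop n z).smulRight (Bop n k z))
        + (bet n k z • (Aop n) + (Bop n k z).smulRight (Aop n z))) z := hD1.add hD2
  have hG : HasFDerivAt G
      ((2 * Real.sqrt (g z))⁻¹ • ((alph n z • (Bop n k) + (Aop n z).smulRight (Bop n k z))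
        + (bet n k z • (Aop n) + (Bop n k z).smulRight (Aop n z)))
       + ((-(2 * (1/(2 * Real.sqrt (g z)))) / (2 * Real.sqrt (g z))^2) • D z).smulRight (D z))
      z := hc.smul hD
  have hfd2 : fderiv ℝ (fderiv ℝ (fun w => Real.sqrt (alph n w * bet n k w))) z
      = (2 * Real.sqrt (g z))⁻¹ • ((alph n z • (Bop n k) + (Aop n z).smulRight (Bop n k z))
        + (bet n k z • (Aop n) + (Bop n k z).smulRight (Aop n z)))
       + ((-(2 * (1/(2 * Real.sqrt (g z)))) / (2 * Real.sqrt (g z))^2) • D z).smulRight (D z) := by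
    rw [hGev.fderiv_eq]
    exact hG.fderiv
  have hlev : ∀ u w : Cn n,
      iteratedFDeriv ℝ 2 (fun w => Real.sqrt (alph n w * bet n k w)) z ![u, w]
      = (2 * Real.sqrt (g z))⁻¹
          * (alph n z * (Bop n k u w) + (Aop n z u) * (Bop n k z w)
            + bet n k z * (Aop n u w) + (Bop n k z u) * (Aop n z w))
        + (-(2 * (1/(2 * Real.sqrt (g z)))) / (2 * Real.sqrt (g z))^2)
          * ((alph n z * Bop n k z u + bet n k z * Aop n z u)
              * (alph n z * Bop n k z w + bet n k z * Aop n z w)) := by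
    intro u w
    rw [iteratedFDeriv_two_apply, hfd2]
    simp only [Matrix.cons_val_zero, Matrix.cons_val_one, Matrix.head_cons,
      ContinuousLinearMap.add_apply, ContinuousLinearMap.smul_apply,
      ContinuousLinearMap.smulRight_apply, smul_eq_mul, hD_def]
    ring
  unfold levi
  rw [hlev, hlev]
  set nv := ∑ i, ((v i).re^2 + (v i).im^2) with hnv_def
  have hPsum : Aop n v v + Aop n (Complex.I • v) (Complex.I • v) = 2 * nv := by
    rw [Aop_apply, Aop_apply, hnv_def]
    simp only [Iv_re]
    rw [mul_sum, mul_sum, mul_sum, ← Finset.sum_add_distrib]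
    exact Finset.sum_congr rfl fun i _ => by ring
  have hRsum : Bop n k v v + Bop n k (Complex.I • v) (Complex.I • v) = 2 * nv := by
    rw [Bop_apply, Bop_apply, hnv_def]
    simp only [Iv_re, Iv_im]
    rw [mul_sum, mul_sum, mul_sum, ← Finset.sum_add_distrib]
    refine Finset.sum_congr rfl fun i _ => ?_
    split <;> ring
  have hA' : Aop n z (Complex.I • v) = 2 * ∑ i, (z i).re * (-(v i).im) := by
    rw [Aop_apply]; simp only [Iv_re]
  have hB' : Bop n k z (Complex.I • v)
      = 2 * ∑ i : Fin n, if (i:ℕ) < k then (z i).re * (-(v i).im)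
          else (z i).im * (v i).re := by
    rw [Bop_apply]
    congr 1
    exact Finset.sum_congr rfl fun i _ => by split <;> simp [Iv_re, Iv_im]
  have hcs : (bet n k z * (Aop n z v) - alph n z * (Bop n k z v))^2
      + (bet n k z * (Aop n z (Complex.I • v)) - alph n z * (Bop n k z (Complex.I • v)))^2
      ≤ 4 * (alph n z * bet n k z) * (alph n z + bet n k z) * nv := by
    rw [Aop_apply, Bop_apply, hA', hB', hnv_def]
    exact cs_main n k z v
  exact final_ineq (alph n z) (bet n k z) (Real.sqrt (g z))
    (Aop n z v) (Bop n k z v) (Aop n z (Complex.I • v)) (Bop n k z (Complex.I • v))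
    (Aop n v v) (Aop n (Complex.I • v) (Complex.I • v))
    (Bop n k v v) (Bop n k (Complex.I • v) (Complex.I • v)) nv
    ha hb rfl hPsum hRsum hcs
end
end

section
/- Let f = √(αβ) with α = Σ_{i=1}^n x_i², β = Σ_{i=1}^k x_i² + Σ_{i=k+1}^n y_i², and v₁ = Σ_i (α y_i δ_{i>k} ∂/∂x_i − (β + α δ_{i≤k}) x_i ∂/∂y_i). Then the matrix M₁ of the form (df ∧ d^c f)(·, i·) in the standard basis of ℝ²ⁿ satisfies M₁ v₁ = (2Σ_{i≤k} x_i² + α + β) v₁, M₁ (J₀v₁) = (2Σ_{i≤k} x_i² + α + β) J₀v₁, and M₁ v = 0 for every v orthogonal to both v₁ and J₀v₁. -/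
noncomputable section

/-- Σ_{i ≤ k} xᵢ² (0-based: i < k). -/
def sxk (n k : ℕ) (z : Cn n) : ℝ := ∑ i : Fin n, if (i : ℕ) < k then (z i).re ^ 2 else 0

/-- v₀ = Σᵢ (α yᵢ δ_{i>k} ∂/∂xᵢ + (β − α δ_{i≤k}) xᵢ ∂/∂yᵢ), as a vector of ℂⁿ = ℝ²ⁿ. -/
def v0 (n k : ℕ) (z : Cn n) : Cn n :=
  (EuclideanSpace.equiv (Fin n) ℂ).symm fun i =>
    ((if k ≤ (i : ℕ) then alph n z * (z i).im else 0 : ℝ) : ℂ) +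
      (((bet n k z - if (i : ℕ) < k then alph n z else 0) * (z i).re : ℝ) : ℂ) * Complex.I

/-- v₁ = Σᵢ (α yᵢ δ_{i>k} ∂/∂xᵢ − (β + α δ_{i≤k}) xᵢ ∂/∂yᵢ). -/
def v1 (n k : ℕ) (z : Cn n) : Cn n :=
  (EuclideanSpace.equiv (Fin n) ℂ).symm fun i =>
    ((if k ≤ (i : ℕ) then alph n z * (z i).im else 0 : ℝ) : ℂ) -
      (((bet n k z + if (i : ℕ) < k then alph n z else 0) * (z i).re : ℝ) : ℂ) * Complex.I
/-- The symmetric bilinear form (df ∧ d^c f)(·, i·)(v,w)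
    = df(v)df(w) + df(iv)df(iw), whose matrix is M₁. -/
def gradForm (n : ℕ) (f : Cn n → ℝ) (z v w : Cn n) : ℝ :=
  fderiv ℝ f z v * fderiv ℝ f z w +
    fderiv ℝ f z (Complex.I • v) * fderiv ℝ f z (Complex.I • w)
/-! ### Auxiliary machinery -/

def Xc (n : ℕ) (i : Fin n) : Cn n →L[ℝ] ℝ :=
  Complex.reCLM.comp ((EuclideanSpace.proj i : Cn n →L[ℂ] ℂ).restrictScalars ℝ)
def Yc (n : ℕ) (i : Fin n) : Cn n →L[ℝ] ℝ :=
  Complex.imCLM.comp ((EuclideanSpace.proj i : Cn n →L[ℂ] ℂ).restrictScalars ℝ)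

@[simp] lemma Xc_apply (n : ℕ) (i : Fin n) (v : Cn n) : Xc n i v = (v i).re := rfl
@[simp] lemma Yc_apply (n : ℕ) (i : Fin n) (v : Cn n) : Yc n i v = (v i).im := rfl

lemma hAlph (n : ℕ) (z : Cn n) :
    HasFDerivAt (alph n) (∑ i, (2 * (z i).re) • Xc n i) z := by
  have h : ∀ i : Fin n, HasFDerivAt (fun q => Xc n i q ^ 2) ((2 * (z i).re) • Xc n i) z := by
    intro i
    have := ((Xc n i).hasFDerivAt (x := z)).mul ((Xc n i).hasFDerivAt (x := z))
    simp only [pow_two]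
    refine this.congr_fderiv ?_
    show Xc n i z • Xc n i + Xc n i z • Xc n i = _
    rw [← add_smul]; ring_nf; rfl
  exact HasFDerivAt.fun_sum (fun i _ => h i)

lemma hBet (n k : ℕ) (z : Cn n) :
    HasFDerivAt (bet n k)
      (∑ i : Fin n, if (i:ℕ) < k then (2 * (z i).re) • Xc n i else (2 * (z i).im) • Yc n i) z := by
  have h : ∀ i : Fin n, HasFDerivAt
      (fun q => if (i:ℕ) < k then Xc n i q ^ 2 else Yc n i q ^ 2)
      (if (i:ℕ) < k then (2 * (z i).re) • Xc n i else (2 * (z i).im) • Yc n i) z := by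
    intro i
    by_cases hik : (i:ℕ) < k <;> simp only [hik, if_true, if_false]
    · have := ((Xc n i).hasFDerivAt (x := z)).mul ((Xc n i).hasFDerivAt (x := z))
      simp only [pow_two]
      refine this.congr_fderiv ?_
      show Xc n i z • Xc n i + Xc n i z • Xc n i = _
      rw [← add_smul]; ring_nf; rfl
    · have := ((Yc n i).hasFDerivAt (x := z)).mul ((Yc n i).hasFDerivAt (x := z))
      simp only [pow_two]
      refine this.congr_fderiv ?_
      show Yc n i z • Yc n i + Yc n i z • Yc n i = _
      rw [← add_smul]; ring_nf; rfl
  exact HasFDerivAt.fun_sum (fun i _ => h i)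

lemma reim (r s : ℝ) :
    ((starRingEnd ℂ) ((r:ℂ) - (s:ℂ)*Complex.I) * ((r:ℂ) - (s:ℂ)*Complex.I)).re = r^2 + s^2 := by
  simp [Complex.mul_re, Complex.mul_im]; ring

lemma reim2 (A B : ℝ) (c : ℂ) :
    ((starRingEnd ℂ) (Complex.I * ((A:ℂ) - (B:ℂ)*Complex.I)) * c).re = B * c.re + A * c.im := by
  simp [Complex.mul_re, Complex.mul_im]; ring

lemma inner_I_I (n : ℕ) (v w : Cn n) :
    (inner ℝ (Complex.I • v) (Complex.I • w) : ℝ) = (inner ℝ v w : ℝ) := by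
  rw [PiLp.inner_apply, PiLp.inner_apply]
  refine Finset.sum_congr rfl fun i _ => ?_
  rw [Complex.inner, Complex.inner, mul_comm ((Complex.I • w) i), mul_comm (w i)]
  show ((starRingEnd ℂ) (Complex.I * v i) * (Complex.I * w i)).re = _
  rw [map_mul, Complex.conj_I]
  show _ = ((starRingEnd ℂ) (v i) * w i).re
  congr 1; ring_nf; rw [Complex.I_sq]; ring

lemma inner_I_self (n : ℕ) (v : Cn n) : (inner ℝ (Complex.I • v) v : ℝ) = 0 := by
  rw [PiLp.inner_apply]
  refine Finset.sum_eq_zero fun i _ => ?_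
  rw [Complex.inner, mul_comm (v i)]
  show ((starRingEnd ℂ) (Complex.I * v i) * v i).re = 0
  rw [map_mul, Complex.conj_I, mul_assoc, mul_comm (-Complex.I), Complex.conj_mul']
  simp [← Complex.ofReal_pow]

lemma norm_v1 (n k : ℕ) (z : Cn n) :
    (inner ℝ (v1 n k z) (v1 n k z) : ℝ) =
      alph n z * bet n k z * (2 * sxk n k z + alph n z + bet n k z) := by
  rw [PiLp.inner_apply]
  simp only [Complex.inner]
  have step : ∀ i : Fin n, ((starRingEnd ℂ) (v1 n k z i) * v1 n k z i).re =
      (alph n z)^2 * (if (i:ℕ) < k then (z i).re^2 else (z i).im^2)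
      + (bet n k z)^2 * (z i).re^2
      + 2 * (alph n z * bet n k z) * (if (i:ℕ) < k then (z i).re^2 else 0) := by
    intro i
    have hv : v1 n k z i =
      ((if k ≤ (i : ℕ) then alph n z * (z i).im else 0 : ℝ) : ℂ) -
        (((bet n k z + if (i : ℕ) < k then alph n z else 0) * (z i).re : ℝ) : ℂ) * Complex.I := rfl
    rw [hv, reim]
    split_ifs with h1 h2 h3 <;> first | omega | ring
  rw [Finset.sum_congr rfl (fun i _ => (congrArg Complex.re (mul_comm _ _)).trans (step i))]
  rw [Finset.sum_add_distrib, Finset.sum_add_distrib, ← Finset.mul_sum, ← Finset.mul_sum,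
    ← Finset.mul_sum]
  show (alph n z)^2 * bet n k z + (bet n k z)^2 * alph n z
      + 2 * (alph n z * bet n k z) * sxk n k z = _
  ring

lemma df_eq (n k : ℕ) (z : Cn n) (h : alph n z * bet n k z ≠ 0) (v : Cn n) :
    fderiv ℝ (fun q => Real.sqrt (alph n q * bet n k q)) z v =
      (inner ℝ (Complex.I • v1 n k z) v : ℝ) / Real.sqrt (alph n z * bet n k z) := by
  have hMul := (hAlph n z).mul (hBet n k z)
  have hF := hMul.sqrt h
  rw [show (fun q => Real.sqrt (alph n q * bet n k q)) = fun y => Real.sqrt ((alph n * bet n k) y) from rfl, hF.fderiv, Pi.mul_apply]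
  have ha0 : 0 ≤ alph n z := Finset.sum_nonneg fun i _ => sq_nonneg _
  have hb0 : 0 ≤ bet n k z := Finset.sum_nonneg fun i _ => by split_ifs <;> positivity
  have hab : 0 < alph n z * bet n k z := lt_of_le_of_ne (mul_nonneg ha0 hb0) (Ne.symm h)
  have hc : 0 < Real.sqrt (alph n z * bet n k z) := Real.sqrt_pos.2 hab
  simp only [ContinuousLinearMap.smul_apply, ContinuousLinearMap.add_apply,
    ContinuousLinearMap.sum_apply, smul_eq_mul,
    apply_ite (fun L : Cn n →L[ℝ] ℝ => L v), Xc_apply, Yc_apply]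
  have hT : (inner ℝ (Complex.I • v1 n k z) v : ℝ) =
      ∑ i : Fin n, ((bet n k z + if (i:ℕ) < k then alph n z else 0) * (z i).re * (v i).re +
        (if k ≤ (i:ℕ) then alph n z * (z i).im else 0) * (v i).im) := by
    rw [PiLp.inner_apply]
    simp only [Complex.inner]
    refine Finset.sum_congr rfl fun i _ => ?_
    show (v i * (starRingEnd ℂ) (Complex.I * v1 n k z i)).re = _
    rw [mul_comm]
    have hv : v1 n k z i =
      ((if k ≤ (i : ℕ) then alph n z * (z i).im else 0 : ℝ) : ℂ) -
        (((bet n k z + if (i : ℕ) < k then alph n z else 0) * (z i).re : ℝ) : ℂ) * Complex.I := rfl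
    rw [hv, reim2]
  have hsum : alph n z *
        (∑ i : Fin n, (if (i:ℕ) < k then 2 * (z i).re * (v i).re else 2 * (z i).im * (v i).im)) +
      bet n k z * (∑ i, 2 * (z i).re * (v i).re) =
      2 * (inner ℝ (Complex.I • v1 n k z) v : ℝ) := by
    rw [hT, Finset.mul_sum, Finset.mul_sum, ← Finset.sum_add_distrib, Finset.mul_sum]
    refine Finset.sum_congr rfl fun i _ => ?_
    split_ifs with h1 h2 h3 <;> first | omega | ring
  rw [eq_div_iff hc.ne', hsum]
  have ha : 0 < alph n z := lt_of_le_of_ne ha0 (Ne.symm (left_ne_zero_of_mul h))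
  have hb : 0 < bet n k z := lt_of_le_of_ne hb0 (Ne.symm (right_ne_zero_of_mul h))
  field_simp [Real.sqrt_ne_zero'.mpr ha, Real.sqrt_ne_zero'.mpr hb]

/-- for f = √(αβ), off L₁ ∪ L₂, the matrix M₁ of (df ∧ d^c f)(·, i·)
has v₁ and J₀v₁ as eigenvectors with eigenvalue 2Σ_{i≤k}xᵢ² + α + β, and kills every
vector orthogonal to both. -/
theorem M1_eigenstructure (n k : ℕ) (hk : k ≤ n) (z : Cn n)
    (h1 : alph n z ≠ 0) (h2 : bet n k z ≠ 0) :
    (∀ w : Cn n,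
        gradForm n (fun q => Real.sqrt (alph n q * bet n k q)) z (v1 n k z) w =
          (2 * sxk n k z + alph n z + bet n k z) * (inner ℝ (v1 n k z) w : ℝ)) ∧
    (∀ w : Cn n,
        gradForm n (fun q => Real.sqrt (alph n q * bet n k q)) z (Complex.I • v1 n k z) w =
          (2 * sxk n k z + alph n z + bet n k z) * (inner ℝ (Complex.I • v1 n k z) w : ℝ)) ∧
    (∀ v : Cn n, (inner ℝ v (v1 n k z) : ℝ) = 0 → (inner ℝ v (Complex.I • v1 n k z) : ℝ) = 0 →
        ∀ w : Cn n, gradForm n (fun q => Real.sqrt (alph n q * bet n k q)) z v w = 0) := by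
  have ha0 : 0 ≤ alph n z := Finset.sum_nonneg fun i _ => sq_nonneg _
  have hb0 : 0 ≤ bet n k z := Finset.sum_nonneg fun i _ => by split_ifs <;> positivity
  have habne : alph n z * bet n k z ≠ 0 := mul_ne_zero h1 h2
  have hab : 0 < alph n z * bet n k z := lt_of_le_of_ne (mul_nonneg ha0 hb0) (Ne.symm habne)
  have hc : 0 < Real.sqrt (alph n z * bet n k z) := Real.sqrt_pos.2 hab
  have hcsq : Real.sqrt (alph n z * bet n k z) * Real.sqrt (alph n z * bet n k z) =
      alph n z * bet n k z := Real.mul_self_sqrt hab.le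
  have df := df_eq n k z habne
  have hII : Complex.I • (Complex.I • v1 n k z) = -(v1 n k z) := by
    rw [smul_smul, Complex.I_mul_I, neg_smul, one_smul]
  refine ⟨fun w => ?_, fun w => ?_, fun v hv1 hv2 w => ?_⟩
  · unfold gradForm
    rw [df, df, df, df, inner_I_self, inner_I_I (v := v1 n k z), norm_v1]
    rw [inner_I_I, zero_div, zero_mul, zero_add, div_mul_div_comm, hcsq]
    field_simp
  · unfold gradForm
    rw [df, df, df, df, hII]
    rw [inner_I_I (v := v1 n k z), inner_neg_right, inner_I_self, neg_zero, zero_div,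
      zero_mul, add_zero, norm_v1, div_mul_div_comm, hcsq]
    field_simp
  · unfold gradForm
    have e1 : (inner ℝ (Complex.I • v1 n k z) v : ℝ) = 0 := by
      rw [real_inner_comm]; exact hv2
    have e2 : (inner ℝ (Complex.I • v1 n k z) (Complex.I • v) : ℝ) = 0 := by
      rw [inner_I_I, real_inner_comm]; exact hv1
    rw [df, df, df, df, e1, e2, zero_div, zero_mul, zero_mul, add_zero]
end
end

section
/- The matrix M₁ representing (d√(αβ) ∧ d^c√(αβ))(·, i·) vanishes at a point (x,y) if and only if (x,y) ∈ L₁ ∪ L₂, i.e., if and only if α(x,y)β(x,y) = 0. -/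
noncomputable section

/-- The matrix M₁ of (d√(αβ) ∧ d^c√(αβ))(·, i·), extended by 0 over L₁ ∪ L₂
(this is its continuous extension). -/
def M1ext (n k : ℕ) (z v w : Cn n) : ℝ :=
  if alph n z * bet n k z = 0 then 0
  else gradForm n (fun q => Real.sqrt (alph n q * bet n k q)) z v w

def coordRe (n : ℕ) (i : Fin n) : Cn n →L[ℝ] ℝ :=
  Complex.reCLM.comp ((EuclideanSpace.proj i : Cn n →L[ℂ] ℂ).restrictScalars ℝ)

def coordIm (n : ℕ) (i : Fin n) : Cn n →L[ℝ] ℝ :=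
  Complex.imCLM.comp ((EuclideanSpace.proj i : Cn n →L[ℂ] ℂ).restrictScalars ℝ)

@[simp] lemma coordRe_apply (n : ℕ) (i : Fin n) (z : Cn n) : coordRe n i z = (z i).re := rfl
@[simp] lemma coordIm_apply (n : ℕ) (i : Fin n) (z : Cn n) : coordIm n i z = (z i).im := rfl

lemma hasFDerivAt_alph_s7 (n : ℕ) (z : Cn n) :
    HasFDerivAt (alph n) (∑ i, (2 * (z i).re) • coordRe n i) z := by
  have h : ∀ i ∈ Finset.univ, HasFDerivAt (fun q : Cn n => (q i).re ^ 2)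
      ((2 * (z i).re) • coordRe n i) z := by
    intro i _
    have h1 : HasFDerivAt (fun q : Cn n => coordRe n i q) (coordRe n i) z :=
      (coordRe n i).hasFDerivAt
    have h2 : HasFDerivAt (fun q : Cn n => coordRe n i q * coordRe n i q) _ z := h1.mul h1
    have : (fun q : Cn n => (q i).re ^ 2) = fun q : Cn n => coordRe n i q * coordRe n i q := by
      funext q; simp [sq]
    rw [this]
    refine h2.congr_fderiv ?_
    ext w; simp [two_mul, add_mul]
  exact HasFDerivAt.fun_sum h

lemma hasFDerivAt_bet_s7 (n k : ℕ) (z : Cn n) :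
    HasFDerivAt (bet n k)
      (∑ i : Fin n, if (i : ℕ) < k then (2 * (z i).re) • coordRe n i
            else (2 * (z i).im) • coordIm n i) z := by
  have h : ∀ i : Fin n, HasFDerivAt
      (fun q : Cn n => if (i : ℕ) < k then (q i).re ^ 2 else (q i).im ^ 2)
      (if (i : ℕ) < k then (2 * (z i).re) • coordRe n i
       else (2 * (z i).im) • coordIm n i) z := by
    intro i
    by_cases hik : (i : ℕ) < k
    · simp only [hik, if_true]
      have h1 : HasFDerivAt (fun q : Cn n => coordRe n i q) (coordRe n i) z :=
        (coordRe n i).hasFDerivAt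
      have h2 : HasFDerivAt (fun q : Cn n => coordRe n i q * coordRe n i q) _ z := h1.mul h1
      have he : (fun q : Cn n => (q i).re ^ 2) = fun q : Cn n => coordRe n i q * coordRe n i q := by
        funext q; simp [sq]
      rw [he]
      refine h2.congr_fderiv ?_
      ext w; simp [two_mul, add_mul]
    · simp only [hik, if_false]
      have h1 : HasFDerivAt (fun q : Cn n => coordIm n i q) (coordIm n i) z :=
        (coordIm n i).hasFDerivAt
      have h2 : HasFDerivAt (fun q : Cn n => coordIm n i q * coordIm n i q) _ z := h1.mul h1
      have he : (fun q : Cn n => (q i).im ^ 2) = fun q : Cn n => coordIm n i q * coordIm n i q := by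
        funext q; simp [sq]
      rw [he]
      refine h2.congr_fderiv ?_
      ext w; simp [two_mul, add_mul]
  exact HasFDerivAt.fun_sum (u := Finset.univ) (fun i _ => h i)

lemma alph_nonneg (n : ℕ) (z : Cn n) : 0 ≤ alph n z :=
  Finset.sum_nonneg fun i _ => sq_nonneg _

lemma bet_nonneg (n k : ℕ) (z : Cn n) : 0 ≤ bet n k z :=
  Finset.sum_nonneg fun i _ => by split <;> exact sq_nonneg _


/-- M₁ vanishes at (x,y) iff (x,y) ∈ L₁ ∪ L₂, i.e. iff αβ = 0. -/
theorem M1_vanishes_iff (n k : ℕ) (hk : k ≤ n) (z : Cn n) :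
    (∀ v w : Cn n, M1ext n k z v w = 0) ↔ alph n z * bet n k z = 0 := by
  constructor
  · intro h
    by_contra hp
    have hApos : 0 < alph n z := lt_of_le_of_ne (alph_nonneg n z)
      (fun hc => hp (by rw [← hc]; ring))
    have hBpos : 0 < bet n k z := lt_of_le_of_ne (bet_nonneg n k z)
      (fun hc => hp (by rw [← hc]; ring))
    have hppos : 0 < alph n z * bet n k z := mul_pos hApos hBpos
    set Dα := ∑ i, (2 * (z i).re) • coordRe n i with hDα
    set Dβ := ∑ i : Fin n, if (i : ℕ) < k then (2 * (z i).re) • coordRe n i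
        else (2 * (z i).im) • coordIm n i with hDβ
    have hAB : HasFDerivAt (fun q => alph n q * bet n k q)
        (alph n z • Dβ + bet n k z • Dα) z :=
      (hasFDerivAt_alph_s7 n z).mul (hasFDerivAt_bet_s7 n k z)
    have hf : HasFDerivAt (fun q => Real.sqrt (alph n q * bet n k q))
        ((1 / (2 * Real.sqrt (alph n z * bet n k z))) • (alph n z • Dβ + bet n k z • Dα)) z :=
      (Real.hasDerivAt_sqrt hp).comp_hasFDerivAt z hAB
    have hDαz : Dα z = 2 * alph n z := by
      simp [hDα, ContinuousLinearMap.sum_apply, alph, Finset.mul_sum, sq]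
      exact Finset.sum_congr rfl fun i _ => by ring
    have hDβz : Dβ z = 2 * bet n k z := by
      simp [hDβ, ContinuousLinearMap.sum_apply, bet, Finset.mul_sum, sq, apply_ite (f := fun L : Cn n →L[ℝ] ℝ => L z)]
      exact Finset.sum_congr rfl fun i _ => by split <;> ring
    have ht : fderiv ℝ (fun q => Real.sqrt (alph n q * bet n k q)) z z
        = (1 / (2 * Real.sqrt (alph n z * bet n k z))) * (4 * (alph n z * bet n k z)) := by
      rw [hf.fderiv]
      simp [hDαz, hDβz]
      ring
    have htpos : 0 < fderiv ℝ (fun q => Real.sqrt (alph n q * bet n k q)) z z := by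
      rw [ht]
      have := Real.sqrt_pos.mpr hppos
      positivity
    have hM := h z z
    rw [M1ext, if_neg hp] at hM
    unfold gradForm at hM
    nlinarith [mul_self_nonneg (fderiv ℝ (fun q => Real.sqrt (alph n q * bet n k q)) z (Complex.I • z))]
  · intro hp v w
    rw [M1ext, if_pos hp]
end
end
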